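/- Let n ∈ ℝ³ be a unit vector and β ∈ ℝ³. With 𝒩 := [[0_{3,3}, −V_n],[V_n, (β·n) I₃]] and ℳ_D := [[0_{3,3}, V_n],[V_n, |β·n| I₃]], a vector z = (b, p) ∈ ℝ⁶ belongs to Ker(ℳ_D − 𝒩) if and only if n × p = 0 and, in the case β·n < 0, additionally p = 0. Hence membership in Ker(ℳ_D − 𝒩) is equivalent to the Dirichlet boundary condition n × p + χ_{β·n<0} (p·n) n = 0 of the vector diffusion–advection–reaction problem. -/
import Mathlib


open Matrix

/-- The cross-product matrix `V_α`, characterized by `V_α s = α × s`. -/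
def crossMat (α : Fin 3 → ℝ) : Matrix (Fin 3) (Fin 3) ℝ :=
  !![0, -α 2, α 1; α 2, 0, -α 0; -α 1, α 0, 0]

/-- With `𝒩 = [[0, −V_n],[V_n, (β·n) I₃]]` and
`ℳ_D = [[0, V_n],[V_n, |β·n| I₃]]` for a unit vector `n`, `z = (b, p) ∈ Ker(ℳ_D − 𝒩)` iff
`n × p = 0` and, if `β·n < 0`, additionally `p = 0`; equivalently, iff the Dirichlet condition
`n × p + χ_{β·n<0} (p·n) n = 0` holds. -/
theorem stmt11 (n β : Fin 3 → ℝ) (hn : ∑ i, n i ^ 2 = 1) :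
    let N : Matrix (Fin 3 ⊕ Fin 3) (Fin 3 ⊕ Fin 3) ℝ :=
      Matrix.fromBlocks 0 (-crossMat n) (crossMat n) ((β ⬝ᵥ n) • 1)
    let MD : Matrix (Fin 3 ⊕ Fin 3) (Fin 3 ⊕ Fin 3) ℝ :=
      Matrix.fromBlocks 0 (crossMat n) (crossMat n) (|β ⬝ᵥ n| • 1)
    ∀ z : Fin 3 ⊕ Fin 3 → ℝ,
      ((MD - N).mulVec z = 0 ↔
        (crossProduct n (fun i => z (Sum.inr i)) = 0 ∧
          (β ⬝ᵥ n < 0 → (fun i => z (Sum.inr i)) = (0 : Fin 3 → ℝ)))) ∧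
      ((MD - N).mulVec z = 0 ↔
        crossProduct n (fun i => z (Sum.inr i)) +
          (if β ⬝ᵥ n < 0 then (((fun i => z (Sum.inr i)) : Fin 3 → ℝ) ⬝ᵥ n) • n else 0) = 0) := by
  intro N MD z
  have hS : n 0 ^ 2 + n 1 ^ 2 + n 2 ^ 2 = 1 := by
    simpa [Fin.sum_univ_three] using hn
  set p0 := z (Sum.inr 0) with hp0
  set p1 := z (Sum.inr 1) with hp1
  set p2 := z (Sum.inr 2) with hp2
  set A := β 0 * n 0 + β 1 * n 1 + β 2 * n 2 with hA
  have hAd : β ⬝ᵥ n = A := by simp [dotProduct, Fin.sum_univ_three, hA]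
  -- kernel characterization
  have key : (MD - N).mulVec z = 0 ↔
      ((n 1 * p2 - n 2 * p1 = 0 ∧ n 2 * p0 - n 0 * p2 = 0 ∧ n 0 * p1 - n 1 * p0 = 0) ∧
        (A < 0 → p0 = 0 ∧ p1 = 0 ∧ p2 = 0)) := by
    rw [funext_iff]
    simp only [N, MD]
    simp [mulVec, dotProduct, Fintype.sum_sum_type, Sum.forall, Fin.sum_univ_three,
      crossMat, Matrix.one_apply, Fin.forall_fin_two, Fin.forall_fin_succ, ← hp0, ← hp1,
      ← hp2, ← hA]
    constructor
    · rintro ⟨⟨h1, h2, h3⟩, h4, h5, h6⟩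
      refine ⟨⟨by linarith, by linarith, by linarith⟩, fun hlt => ?_⟩
      have he : |A| - A ≠ 0 := by rw [abs_of_neg hlt]; intro h; linarith
      exact ⟨h4.resolve_left he, h5.resolve_left he, h6.resolve_left he⟩
    · rintro ⟨⟨h1, h2, h3⟩, h4⟩
      rcases lt_or_ge A 0 with hlt | hge
      · obtain ⟨e0, e1, e2⟩ := h4 hlt
        exact ⟨⟨by linarith, by linarith, by linarith⟩, Or.inr e0, Or.inr e1, Or.inr e2⟩
      · have he : |A| - A = 0 := by rw [abs_of_nonneg hge]; ring
        exact ⟨⟨by linarith, by linarith, by linarith⟩, Or.inl he, Or.inl he, Or.inl he⟩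
  constructor
  · rw [key, hAd]
    constructor
    · rintro ⟨⟨h1, h2, h3⟩, h4⟩
      refine ⟨?_, fun hlt => ?_⟩
      · funext i
        fin_cases i <;>
          simp [crossProduct, ← hp0, ← hp1, ← hp2] <;> linarith
      · obtain ⟨e0, e1, e2⟩ := h4 hlt
        funext i
        fin_cases i <;> simp [← hp0, ← hp1, ← hp2, e0, e1, e2]
    · rintro ⟨h1, h2⟩
      have c0 := congrFun h1 0
      have c1 := congrFun h1 1
      have c2 := congrFun h1 2
      simp [crossProduct, ← hp0, ← hp1, ← hp2] at c0 c1 c2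
      refine ⟨⟨by linarith, by linarith, by linarith⟩, fun hlt => ?_⟩
      have := h2 hlt
      exact ⟨by simpa using congrFun this 0, by simpa using congrFun this 1,
        by simpa using congrFun this 2⟩
  · rw [key, hAd]
    rcases lt_or_ge A 0 with hlt | hge
    · rw [if_pos hlt]
      constructor
      · rintro ⟨-, h4⟩
        obtain ⟨e0, e1, e2⟩ := h4 hlt
        funext i
        fin_cases i <;>
          simp [crossProduct, dotProduct, Fin.sum_univ_three, ← hp0, ← hp1, ← hp2,
            e0, e1, e2]
      · intro h
        have c0 := congrFun h 0
        have c1 := congrFun h 1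
        have c2 := congrFun h 2
        simp [crossProduct, dotProduct, Fin.sum_univ_three, ← hp0, ← hp1, ← hp2] at c0 c1 c2
        -- derive d = 0
        have hd : p0 * n 0 + p1 * n 1 + p2 * n 2 = 0 := by
          linear_combination n 0 * c0 + n 1 * c1 + n 2 * c2 -
            (p0 * n 0 + p1 * n 1 + p2 * n 2) * hS
        have e0 : p0 = 0 := by
          linear_combination n 0 * hd + n 2 * c1 - n 1 * c2 - p0 * hS
        have e1 : p1 = 0 := by
          linear_combination n 1 * hd + n 0 * c2 - n 2 * c0 - p1 * hS
        have e2 : p2 = 0 := by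
          linear_combination n 2 * hd + n 1 * c0 - n 0 * c1 - p2 * hS
        exact ⟨⟨by linear_combination n 1 * e2 - n 2 * e1,
          by linear_combination n 2 * e0 - n 0 * e2,
          by linear_combination n 0 * e1 - n 1 * e0⟩, fun _ => ⟨e0, e1, e2⟩⟩
    · rw [if_neg (not_lt.mpr hge), add_zero]
      constructor
      · rintro ⟨⟨h1, h2, h3⟩, -⟩
        funext i
        fin_cases i <;> simp [crossProduct, ← hp0, ← hp1, ← hp2] <;> linarith
      · intro h
        have c0 := congrFun h 0
        have c1 := congrFun h 1
        have c2 := congrFun h 2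
        simp [crossProduct, ← hp0, ← hp1, ← hp2] at c0 c1 c2
        exact ⟨⟨by linarith, by linarith, by linarith⟩, fun hlt => absurd hlt (not_lt.mpr hge)⟩
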